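/- arXiv:1501.01741 — 3 statements merged into one kernel-verified Lean document; each statement's English description precedes it below -/
import Mathlib

section
/- Let G be a finite simple undirected graph on n vertices and let 2 ≤ k ≤ n. For every partition 𝒮 = {S_1,…,S_k} of V(G) into k parts each of positive volume, h_G^{(k)}(𝒮) ≥ (1/(2k)) Σ_{i=0}^{k-1} λ_i. Consequently, the k-fold Cheeger constant satisfies h_G^{(k)} ≥ (1/(2k)) Σ_{i=0}^{k-1} λ_i (equivalently, h_G^{(k)} ≥ (k-1)/(2k) − Λ/2, where Λ = (1/k) Σ_{i=1}^{k-1} (1 − λ_i)). -/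
open Matrix Finset

/-- The degree-based volume of a vertex subset: the sum of the degrees of its vertices. -/
def gvol {n : ℕ} (G : SimpleGraph (Fin n)) [DecidableRel G.Adj] (S : Finset (Fin n)) : ℕ :=
  ∑ v ∈ S, G.degree v

/-- `eCount G S T` is the number of ordered pairs `(u, v)` with `u ∈ S`, `v ∈ T`, `u ~ v`. -/
def eCount {n : ℕ} (G : SimpleGraph (Fin n)) [DecidableRel G.Adj] (S T : Finset (Fin n)) : ℕ :=
  ∑ u ∈ S, ∑ v ∈ T, if G.Adj u v then 1 else 0

/-- The normalized Laplacian `D^{-1/2} (D - A) D^{-1/2}`, with the convention that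
`(D^{-1/2})_{uu} = 0` for isolated vertices `u`. -/
noncomputable def normLap {n : ℕ} (G : SimpleGraph (Fin n)) [DecidableRel G.Adj] :
    Matrix (Fin n) (Fin n) ℝ :=
  Matrix.diagonal (fun v => (Real.sqrt (G.degree v))⁻¹) * G.lapMatrix ℝ *
    Matrix.diagonal (fun v => (Real.sqrt (G.degree v))⁻¹)

/-- A partition of the vertex set into `k` parts, each of positive volume. -/
def IsVolPartition {n k : ℕ} (G : SimpleGraph (Fin n)) [DecidableRel G.Adj]
    (P : Fin k → Finset (Fin n)) : Prop :=
  (∀ i j, i ≠ j → Disjoint (P i) (P j)) ∧ (∀ v, ∃ i, v ∈ P i) ∧ (∀ i, 0 < gvol G (P i))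

/-- The `k`-fold Cheeger ratio of a partition:
`h_G^{(k)}(𝒮) = (1/k) ∑_{i<j} e(S_i,S_j) / min(vol S_i, vol S_j)`. -/
noncomputable def cheegerVal {n k : ℕ} (G : SimpleGraph (Fin n)) [DecidableRel G.Adj]
    (P : Fin k → Finset (Fin n)) : ℝ :=
  (1 / (k : ℝ)) * ∑ i : Fin k, ∑ j : Fin k,
    if i < j then (eCount G (P i) (P j) : ℝ) / min (gvol G (P i) : ℝ) (gvol G (P j) : ℝ)
    else 0

/-- The `k`-fold Cheeger constant: the infimum of `cheegerVal` over all partitions of the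
vertices into `k` parts of positive volume. -/
noncomputable def cheegerConst (n k : ℕ) (G : SimpleGraph (Fin n)) [DecidableRel G.Adj] : ℝ :=
  sInf { x : ℝ | ∃ P : Fin k → Finset (Fin n), IsVolPartition G P ∧ x = cheegerVal G P }


/-- indicator sum to subset sum -/
lemma sum_ind {n : ℕ} (W : Finset (Fin n)) (g : Fin n → ℝ) :
    ∑ v : Fin n, (if v ∈ W then g v else 0) = ∑ v ∈ W, g v := by
  rw [Finset.sum_ite_mem, Finset.univ_inter]

lemma castLE_sum {n k : ℕ} (hkn : k ≤ n) (f : Fin n → ℝ) :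
    ∑ i : Fin k, f (Fin.castLE hkn i) = ∑ j : Fin n, (if (j : ℕ) < k then f j else 0) := by
  rw [sum_ite, Finset.sum_const_zero, add_zero]
  have hmap : (univ : Finset (Fin k)).map (Fin.castLEEmb hkn) =
      univ.filter (fun j : Fin n => (j:ℕ) < k) := by
    ext j
    simp only [Finset.mem_map, Finset.mem_univ, true_and, Finset.mem_filter,
      Fin.castLEEmb, Function.Embedding.coeFn_mk]
    constructor
    · rintro ⟨i, rfl⟩; exact i.isLt
    · intro h; exact ⟨⟨j, h⟩, rfl⟩
  rw [← hmap, Finset.sum_map]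
  rfl

lemma ind_card {n k : ℕ} (hkn : k ≤ n) :
    ∑ j : Fin n, (if (j : ℕ) < k then (1:ℝ) else 0) = k := by
  rw [Finset.sum_boole]
  have hmap : (univ : Finset (Fin k)).map (Fin.castLEEmb hkn) =
      univ.filter (fun j : Fin n => (j:ℕ) < k) := by
    ext j
    simp only [Finset.mem_map, Finset.mem_univ, true_and, Finset.mem_filter,
      Fin.castLEEmb, Function.Embedding.coeFn_mk]
    constructor
    · rintro ⟨i, rfl⟩; exact i.isLt
    · intro h; exact ⟨⟨j, h⟩, rfl⟩
  rw [← hmap, Finset.card_map, Finset.card_univ, Fintype.card_fin]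

lemma weight_bound {n k : ℕ} (hkn : k ≤ n) (hk0 : 0 < k) (lam : Fin n → ℝ)
    (hmono : Monotone lam) (c : Fin n → ℝ) (h0 : ∀ j, 0 ≤ c j) (h1 : ∀ j, c j ≤ 1)
    (hsum : ∑ j, c j = k) :
    ∑ i : Fin k, lam (Fin.castLE hkn i) ≤ ∑ j, lam j * c j := by
  have hk1 : k - 1 < n := by omega
  set t := lam ⟨k - 1, hk1⟩ with ht
  have key : ∀ j : Fin n,
      (if (j : ℕ) < k then lam j else 0) + t * (c j - if (j:ℕ) < k then 1 else 0)
        ≤ lam j * c j := by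
    intro j
    by_cases hj : (j : ℕ) < k
    · simp only [if_pos hj]
      have h1' : lam j ≤ t := hmono (by simp only [Fin.le_def]; omega)
      nlinarith [h1 j, h0 j]
    · simp only [if_neg hj]
      have h2' : t ≤ lam j := hmono (by simp only [Fin.le_def]; omega)
      nlinarith [h0 j]
  calc ∑ i : Fin k, lam (Fin.castLE hkn i)
      = ∑ j : Fin n, ((if (j : ℕ) < k then lam j else 0)
          + t * (c j - if (j:ℕ) < k then 1 else 0)) := by
        rw [Finset.sum_add_distrib, ← Finset.mul_sum, Finset.sum_sub_distrib, hsum,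
          ind_card hkn, sub_self, mul_zero, add_zero, castLE_sum]
    _ ≤ ∑ j, lam j * c j := Finset.sum_le_sum fun j _ => key j


lemma proj_diag_le_one {n k : ℕ} (z : Fin k → Fin n → ℝ)
    (hz : ∀ i i', z i ⬝ᵥ z i' = if i = i' then 1 else 0) (j : Fin n) :
    ∑ i, (z i j)^2 ≤ 1 := by
  set c := ∑ i, (z i j)^2 with hc
  have hc0 : 0 ≤ c := Finset.sum_nonneg fun i _ => sq_nonneg _
  have h1 : ∑ m : Fin n, (∑ i, z i j * z i m)^2 = c := by
    have hexp : ∀ m, (∑ i, z i j * z i m)^2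
        = ∑ i, ∑ i', (z i j * z i m) * (z i' j * z i' m) := by
      intro m; rw [sq, Finset.sum_mul_sum]
    simp_rw [hexp]
    rw [Finset.sum_comm]
    have : ∀ i, ∑ m : Fin n, ∑ i', (z i j * z i m) * (z i' j * z i' m)
        = ∑ i', z i j * z i' j * (if i = i' then 1 else 0) := by
      intro i
      rw [Finset.sum_comm]
      refine Finset.sum_congr rfl fun i' _ => ?_
      rw [← hz i i', dotProduct, Finset.mul_sum]
      exact Finset.sum_congr rfl fun m _ => by ring
    simp_rw [this, mul_ite, mul_one, mul_zero, Finset.sum_ite_eq, Finset.mem_univ, if_true]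
    exact Finset.sum_congr rfl fun i _ => (sq (z i j)).symm ▸ (sq (z i j) ▸ rfl)
  have h2 : c^2 ≤ c := by
    have hjterm : (∑ i, z i j * z i j)^2 ≤ ∑ m : Fin n, (∑ i, z i j * z i m)^2 :=
      Finset.single_le_sum (f := fun m => (∑ i, z i j * z i m)^2)
        (fun m _ => sq_nonneg _) (Finset.mem_univ j)
    calc c^2 = (∑ i, z i j * z i j)^2 := by rw [hc]; congr 1; exact Finset.sum_congr rfl fun i _ => sq (z i j)
      _ ≤ _ := hjterm
      _ = c := h1
  nlinarith

lemma kyfan {n k : ℕ} (hkn : k ≤ n) (hk0 : 0 < k) (L : Matrix (Fin n) (Fin n) ℝ)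
    (hL : L.IsHermitian) (lam : Fin n → ℝ) (hmono : Monotone lam)
    (σ : Equiv.Perm (Fin n)) (hperm : lam = hL.eigenvalues ∘ σ)
    (y : Fin k → Fin n → ℝ) (hy : ∀ i i', y i ⬝ᵥ y i' = if i = i' then 1 else 0) :
    ∑ i : Fin k, lam (Fin.castLE hkn i) ≤ ∑ i : Fin k, y i ⬝ᵥ (L *ᵥ y i) := by
  set U : Matrix (Fin n) (Fin n) ℝ := (hL.eigenvectorUnitary : Matrix (Fin n) (Fin n) ℝ) with hUdef
  have hstar : star U = Uᵀ := Matrix.conjTranspose_eq_transpose_of_trivial U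
  have hU1 : U * Uᵀ = 1 := by
    rw [← hstar]; exact (Matrix.mem_unitaryGroup_iff).mp (hL.eigenvectorUnitary).2
  set z : Fin k → Fin n → ℝ := fun i => Uᵀ *ᵥ y i with hzdef
  have hz : ∀ i i', z i ⬝ᵥ z i' = if i = i' then 1 else 0 := by
    intro i i'
    rw [← hy i i']
    show (Uᵀ *ᵥ y i) ⬝ᵥ (Uᵀ *ᵥ y i') = _
    rw [Matrix.mulVec_transpose U (y i), ← Matrix.dotProduct_mulVec,
      Matrix.mulVec_mulVec, hU1, Matrix.one_mulVec]
  have hray : ∀ i, y i ⬝ᵥ (L *ᵥ y i) = ∑ j, hL.eigenvalues j * (z i j)^2 := by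
    intro i
    conv_lhs => rw [hL.spectral_theorem]
    rw [Unitary.conjStarAlgAut_apply, hstar, ← Matrix.mulVec_mulVec,
      ← Matrix.mulVec_mulVec, Matrix.dotProduct_mulVec (y i) U, ← Matrix.mulVec_transpose]
    show z i ⬝ᵥ (Matrix.diagonal hL.eigenvalues *ᵥ z i) = _
    simp only [dotProduct, Matrix.mulVec_diagonal]
    exact Finset.sum_congr rfl fun j _ => by ring
  set c : Fin n → ℝ := fun j => ∑ i, (z i j)^2 with hcdef
  have hzz : ∀ i, ∑ j, (z i j)^2 = 1 := by
    intro i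
    have h := hz i i
    rw [if_pos rfl] at h
    rw [← h]
    exact Finset.sum_congr rfl fun j _ => sq (z i j)
  have hsum : ∑ j, c j = (k : ℝ) := by
    rw [hcdef]
    rw [Finset.sum_comm]
    simp only [hzz]
    simp
  have h0 : ∀ j, 0 ≤ c j := fun j => Finset.sum_nonneg fun i _ => sq_nonneg _
  have h1 : ∀ j, c j ≤ 1 := fun j => proj_diag_le_one z hz j
  have hrhs : ∑ i : Fin k, y i ⬝ᵥ (L *ᵥ y i) = ∑ j, hL.eigenvalues j * c j := by
    simp only [hray, hcdef]
    rw [Finset.sum_comm]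
    exact Finset.sum_congr rfl fun j _ => by rw [Finset.mul_sum]
  rw [hrhs]
  have hperm2 : ∑ j, hL.eigenvalues j * c j = ∑ j, lam j * c (σ j) := by
    rw [← Equiv.sum_comp σ (fun j => hL.eigenvalues j * c j)]
    exact Finset.sum_congr rfl fun j _ => by rw [hperm]; rfl
  rw [hperm2]
  exact weight_bound hkn hk0 lam hmono (fun j => c (σ j)) (fun j => h0 _) (fun j => h1 _)
    (by rw [← hsum, ← Equiv.sum_comp σ c])

lemma eCount_full {n : ℕ} (G : SimpleGraph (Fin n)) [DecidableRel G.Adj]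
    (S T : Finset (Fin n)) :
    ∑ u : Fin n, ∑ v : Fin n, (if u ∈ S ∧ v ∈ T ∧ G.Adj u v then (1:ℝ) else 0)
      = (eCount G S T : ℝ) := by
  rw [eCount]
  push_cast
  rw [← sum_ind S (fun u => ∑ v ∈ T, if G.Adj u v then (1:ℝ) else 0)]
  refine Finset.sum_congr rfl fun u _ => ?_
  by_cases hu : u ∈ S
  · simp only [hu, true_and, if_true]
    rw [← sum_ind T (fun v => if G.Adj u v then (1:ℝ) else 0)]
    refine Finset.sum_congr rfl fun v _ => ?_
    by_cases hv : v ∈ T <;> simp [hv]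
  · simp [hu]

lemma eCount_symm {n : ℕ} (G : SimpleGraph (Fin n)) [DecidableRel G.Adj]
    (S T : Finset (Fin n)) : eCount G S T = eCount G T S := by
  rw [eCount, eCount, Finset.sum_comm]
  refine Finset.sum_congr rfl fun v _ => Finset.sum_congr rfl fun u _ => ?_
  simp [G.adj_comm]

lemma quad_form {n : ℕ} (G : SimpleGraph (Fin n)) [DecidableRel G.Adj] (S : Finset (Fin n)) :
    (fun v => if v ∈ S then Real.sqrt (G.degree v) else 0) ⬝ᵥ
      (normLap G *ᵥ fun v => if v ∈ S then Real.sqrt (G.degree v) else 0)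
    = (eCount G S Sᶜ : ℝ) := by
  classical
  set d : Fin n → ℝ := fun v => (Real.sqrt (G.degree v))⁻¹ with hd
  set x : Fin n → ℝ := fun v => if v ∈ S then Real.sqrt (G.degree v) else 0 with hx
  set χ : Fin n → ℝ := fun v => if v ∈ S ∧ G.degree v ≠ 0 then 1 else 0 with hχ
  have hDx : Matrix.diagonal d *ᵥ x = χ := by
    ext v
    rw [Matrix.mulVec_diagonal]
    by_cases hv : v ∈ S
    · by_cases h0 : G.degree v = 0
      · simp [hx, hχ, hd, hv, h0]
      · have hne : Real.sqrt (G.degree v) ≠ 0 := by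
          have h1 : (0:ℝ) < G.degree v := by
            exact_mod_cast Nat.pos_of_ne_zero h0
          exact ne_of_gt (Real.sqrt_pos.mpr h1)
        show d v * x v = χ v
        simp only [hd, hx, hχ, if_pos hv, if_pos (by exact ⟨hv, h0⟩ : v ∈ S ∧ G.degree v ≠ 0)]
        exact inv_mul_cancel₀ hne
    · simp [hx, hχ, hd, hv]
  have hsym : ∀ w : Fin n → ℝ, x ⬝ᵥ (Matrix.diagonal d *ᵥ w) = (Matrix.diagonal d *ᵥ x) ⬝ᵥ w := by
    intro w
    simp only [dotProduct, Matrix.mulVec_diagonal]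
    exact Finset.sum_congr rfl fun v _ => by ring
  have hstep : normLap G *ᵥ x = Matrix.diagonal d *ᵥ (G.lapMatrix ℝ *ᵥ χ) := by
    rw [normLap, ← Matrix.mulVec_mulVec, ← Matrix.mulVec_mulVec, hDx]
  rw [hstep, hsym, hDx]
  have hlap : χ ⬝ᵥ (G.lapMatrix ℝ *ᵥ χ)
      = (∑ u : Fin n, ∑ v : Fin n, if G.Adj u v then (χ u - χ v)^2 else 0) / 2 := by
    rw [← Matrix.toLinearMap₂'_apply', SimpleGraph.lapMatrix_toLinearMap₂']
  rw [hlap]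
  have hterm : ∀ u v : Fin n, (if G.Adj u v then (χ u - χ v)^2 else 0)
      = (if u ∈ S ∧ v ∈ Sᶜ ∧ G.Adj u v then 1 else 0)
        + (if v ∈ S ∧ u ∈ Sᶜ ∧ G.Adj u v then 1 else 0) := by
    intro u v
    by_cases hadj : G.Adj u v
    · have hdu : G.degree u ≠ 0 :=
        Nat.pos_iff_ne_zero.mp ((G.degree_pos_iff_exists_adj u).mpr ⟨v, hadj⟩)
      have hdv : G.degree v ≠ 0 :=
        Nat.pos_iff_ne_zero.mp ((G.degree_pos_iff_exists_adj v).mpr ⟨u, hadj.symm⟩)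
      simp only [hχ, if_pos hadj, Finset.mem_compl]
      by_cases hu : u ∈ S <;> by_cases hv : v ∈ S <;>
        simp [hu, hv, hdu, hdv, hadj] <;> norm_num
    · simp [hadj]
  have hsplit : ∑ u : Fin n, ∑ v : Fin n, (if G.Adj u v then (χ u - χ v)^2 else 0)
      = (∑ u : Fin n, ∑ v : Fin n, (if u ∈ S ∧ v ∈ Sᶜ ∧ G.Adj u v then (1:ℝ) else 0))
        + ∑ u : Fin n, ∑ v : Fin n, (if v ∈ S ∧ u ∈ Sᶜ ∧ G.Adj u v then (1:ℝ) else 0) := by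
    rw [← Finset.sum_add_distrib]
    refine Finset.sum_congr rfl fun u _ => ?_
    rw [← Finset.sum_add_distrib]
    exact Finset.sum_congr rfl fun v _ => hterm u v
  have hswap : ∑ u : Fin n, ∑ v : Fin n, (if v ∈ S ∧ u ∈ Sᶜ ∧ G.Adj u v then (1:ℝ) else 0)
      = ∑ u : Fin n, ∑ v : Fin n, (if u ∈ S ∧ v ∈ Sᶜ ∧ G.Adj u v then (1:ℝ) else 0) := by
    rw [Finset.sum_comm]
    refine Finset.sum_congr rfl fun v _ => Finset.sum_congr rfl fun u _ => ?_
    rw [if_congr (iff_of_eq (by rw [G.adj_comm])) rfl rfl]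
  rw [hsplit, hswap, eCount_full]
  ring

lemma dot_ind {n : ℕ} (G : SimpleGraph (Fin n)) [DecidableRel G.Adj]
    (S T : Finset (Fin n)) (hST : Disjoint S T) :
    (fun v => if v ∈ S then Real.sqrt (G.degree v) else 0) ⬝ᵥ
      (fun v => if v ∈ T then Real.sqrt (G.degree v) else 0) = 0 := by
  rw [dotProduct]
  refine Finset.sum_eq_zero fun v _ => ?_
  by_cases hv : v ∈ S
  · have : v ∉ T := fun h => (Finset.disjoint_left.mp hST) hv h
    simp [hv, this]
  · simp [hv]

lemma dot_self_ind {n : ℕ} (G : SimpleGraph (Fin n)) [DecidableRel G.Adj]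
    (S : Finset (Fin n)) :
    (fun v => if v ∈ S then Real.sqrt (G.degree v) else 0) ⬝ᵥ
      (fun v => if v ∈ S then Real.sqrt (G.degree v) else 0) = (gvol G S : ℝ) := by
  rw [dotProduct, gvol]
  push_cast
  rw [← sum_ind S (fun v => (G.degree v : ℝ))]
  refine Finset.sum_congr rfl fun v _ => ?_
  by_cases hv : v ∈ S
  · simp only [hv, if_true]
    exact Real.mul_self_sqrt (by positivity)
  · simp [hv]

lemma eCount_compl {n k : ℕ} (G : SimpleGraph (Fin n)) [DecidableRel G.Adj]
    (P : Fin k → Finset (Fin n)) (hdisj : ∀ i j, i ≠ j → Disjoint (P i) (P j))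
    (hcov : ∀ v, ∃ i, v ∈ P i) (i : Fin k) :
    eCount G (P i) (P i)ᶜ = ∑ j ∈ univ.erase i, eCount G (P i) (P j) := by
  have hbi : ((univ : Finset (Fin k)).erase i).biUnion P = (P i)ᶜ := by
    ext v
    simp only [Finset.mem_biUnion, Finset.mem_erase, Finset.mem_univ, and_true,
      Finset.mem_compl]
    constructor
    · rintro ⟨j, hj, hv⟩
      exact fun hvi => (Finset.disjoint_left.mp (hdisj j i hj)) hv hvi
    · intro hvi
      obtain ⟨j, hj⟩ := hcov v
      exact ⟨j, fun h => hvi (h ▸ hj), hj⟩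
  simp only [eCount]
  rw [Finset.sum_comm]
  rw [← hbi, Finset.sum_biUnion (fun a _ b _ hab => hdisj a b hab)]
  exact Finset.sum_congr rfl fun j _ => Finset.sum_comm


lemma sum_erase_two {k : ℕ} (f : Fin k → Fin k → ℝ) (hsymm : ∀ i j, f i j = f j i) :
    ∑ i, ∑ j ∈ univ.erase i, f i j = 2 * ∑ i, ∑ j, if i < j then f i j else 0 := by
  have h1 : ∀ i : Fin k, ∑ j ∈ univ.erase i, f i j
      = ∑ j, ((if i < j then f i j else 0) + (if j < i then f i j else 0)) := by
    intro i
    rw [← Finset.filter_ne' univ i, Finset.sum_filter]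
    refine Finset.sum_congr rfl fun j _ => ?_
    rcases lt_trichotomy i j with h | h | h
    · simp [h.ne', h, asymm h]
    · simp [h, lt_irrefl]
    · simp [h.ne, h, asymm h]
  simp_rw [h1, Finset.sum_add_distrib]
  have h2 : ∑ i : Fin k, ∑ j, (if j < i then f i j else 0)
      = ∑ i : Fin k, ∑ j, (if i < j then f i j else 0) := by
    rw [Finset.sum_comm]
    exact Finset.sum_congr rfl fun i _ => Finset.sum_congr rfl fun j _ => by
      rcases lt_or_ge i j with h | h
      · simp [h, hsymm i j]
      · have h' : ¬ i < j := not_lt.mpr h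
        have h'' : ¬ j < i ∨ j < i := em' _
        by_cases hji : j < i
        · simp [hji, h', hsymm i j]
        · simp [hji, h']
  rw [h2]
  ring

/-- Lower bound for the `k`-fold Cheeger constant: every `k`-part partition of positive
volumes has Cheeger ratio at least `(1/(2k)) ∑_{i=0}^{k-1} λ_i`, and consequently so does
the `k`-fold Cheeger constant. -/
theorem kfold_cheeger_lower_bound {n k : ℕ} (hk : 2 ≤ k) (hkn : k ≤ n)
    (G : SimpleGraph (Fin n)) [DecidableRel G.Adj]
    (hL : (normLap G).IsHermitian)
    (lam : Fin n → ℝ) (hmono : Monotone lam)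
    (hperm : ∃ σ : Equiv.Perm (Fin n), lam = hL.eigenvalues ∘ σ)
    (hlam0 : lam ⟨0, by omega⟩ = 0) :
    (∀ P : Fin k → Finset (Fin n), IsVolPartition G P →
      (1 / (2 * (k : ℝ))) * ∑ i : Fin k, lam (Fin.castLE hkn i) ≤ cheegerVal G P) ∧
    ((∃ P : Fin k → Finset (Fin n), IsVolPartition G P) →
      (1 / (2 * (k : ℝ))) * ∑ i : Fin k, lam (Fin.castLE hkn i) ≤ cheegerConst n k G) := by
  obtain ⟨σ, hσ⟩ := hperm
  have hk0 : 0 < k := by omega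
  have main : ∀ P : Fin k → Finset (Fin n), IsVolPartition G P →
      (1 / (2 * (k : ℝ))) * ∑ i : Fin k, lam (Fin.castLE hkn i) ≤ cheegerVal G P := by
    rintro P ⟨hdisj, hcov, hvol⟩
    set x : Fin k → Fin n → ℝ :=
      fun i v => if v ∈ P i then Real.sqrt (G.degree v) else 0 with hxdef
    have hvolR : ∀ i, (0:ℝ) < (gvol G (P i) : ℝ) := fun i => by exact_mod_cast hvol i
    have hs0 : ∀ i, Real.sqrt (gvol G (P i)) ≠ 0 :=
      fun i => ne_of_gt (Real.sqrt_pos.mpr (hvolR i))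
    have hss : ∀ i, Real.sqrt (gvol G (P i)) * Real.sqrt (gvol G (P i)) = (gvol G (P i) : ℝ) :=
      fun i => Real.mul_self_sqrt (le_of_lt (hvolR i))
    set y : Fin k → Fin n → ℝ :=
      fun i => (Real.sqrt (gvol G (P i)))⁻¹ • x i with hydef
    have hyo : ∀ i i', y i ⬝ᵥ y i' = if i = i' then 1 else 0 := by
      intro i i'
      show ((Real.sqrt (gvol G (P i)))⁻¹ • x i) ⬝ᵥ ((Real.sqrt (gvol G (P i')))⁻¹ • x i') = _
      rw [smul_dotProduct, dotProduct_smul, smul_eq_mul, smul_eq_mul]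
      by_cases h : i = i'
      · subst h
        rw [if_pos rfl, dot_self_ind G (P i)]
        field_simp
        rw [sq, hss i]
        exact div_self (ne_of_gt (hvolR i))
      · rw [if_neg h, dot_ind G _ _ (hdisj i i' h), mul_zero, mul_zero]
    have hray : ∀ i, y i ⬝ᵥ (normLap G *ᵥ y i)
        = (eCount G (P i) (P i)ᶜ : ℝ) / (gvol G (P i) : ℝ) := by
      intro i
      show ((Real.sqrt (gvol G (P i)))⁻¹ • x i) ⬝ᵥ
          (normLap G *ᵥ ((Real.sqrt (gvol G (P i)))⁻¹ • x i)) = _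
      rw [Matrix.mulVec_smul, smul_dotProduct, dotProduct_smul,
        smul_eq_mul, smul_eq_mul, quad_form G (P i)]
      rw [← mul_assoc, ← mul_inv, hss i]
      exact (div_eq_inv_mul _ _).symm
    have hK := kyfan hkn hk0 (normLap G) hL lam hmono σ hσ y hyo
    have hsum1 : ∑ i : Fin k, y i ⬝ᵥ (normLap G *ᵥ y i)
        = ∑ i : Fin k, ∑ j ∈ univ.erase i,
            (eCount G (P i) (P j) : ℝ) / (gvol G (P i) : ℝ) := by
      refine Finset.sum_congr rfl fun i _ => ?_
      rw [hray i, eCount_compl G P hdisj hcov i]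
      push_cast
      rw [Finset.sum_div]
    have hle2 : ∑ i : Fin k, ∑ j ∈ univ.erase i,
          (eCount G (P i) (P j) : ℝ) / (gvol G (P i) : ℝ)
        ≤ ∑ i : Fin k, ∑ j ∈ univ.erase i,
            (eCount G (P i) (P j) : ℝ) / min (gvol G (P i) : ℝ) (gvol G (P j) : ℝ) := by
      refine Finset.sum_le_sum fun i _ => Finset.sum_le_sum fun j _ => ?_
      have h1 : (0:ℝ) < min (gvol G (P i) : ℝ) (gvol G (P j) : ℝ) :=
        lt_min (hvolR i) (hvolR j)
      have h2 : min (gvol G (P i) : ℝ) (gvol G (P j) : ℝ) ≤ (gvol G (P i) : ℝ) :=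
        min_le_left _ _
      have h3 : (0:ℝ) ≤ (eCount G (P i) (P j) : ℝ) := by positivity
      gcongr
    have hsym2 : ∑ i : Fin k, ∑ j ∈ univ.erase i,
          (eCount G (P i) (P j) : ℝ) / min (gvol G (P i) : ℝ) (gvol G (P j) : ℝ)
        = 2 * ∑ i : Fin k, ∑ j : Fin k, (if i < j then
            (eCount G (P i) (P j) : ℝ) / min (gvol G (P i) : ℝ) (gvol G (P j) : ℝ) else 0) := by
      refine sum_erase_two _ fun i j => ?_
      rw [eCount_symm G (P i) (P j), min_comm]
    set Ssum := ∑ i : Fin k, ∑ j : Fin k, (if i < j then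
        (eCount G (P i) (P j) : ℝ) / min (gvol G (P i) : ℝ) (gvol G (P j) : ℝ) else 0)
      with hS
    have hT : ∑ i : Fin k, lam (Fin.castLE hkn i) ≤ 2 * Ssum := by
      calc ∑ i : Fin k, lam (Fin.castLE hkn i)
          ≤ ∑ i : Fin k, y i ⬝ᵥ (normLap G *ᵥ y i) := hK
        _ = _ := hsum1
        _ ≤ _ := hle2
        _ = 2 * Ssum := hsym2
    rw [cheegerVal]
    have hkpos : (0:ℝ) < (k:ℝ) := by exact_mod_cast hk0
    have := mul_le_mul_of_nonneg_left hT (by positivity : (0:ℝ) ≤ 1 / (2 * (k:ℝ)))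
    calc (1 / (2 * (k : ℝ))) * ∑ i : Fin k, lam (Fin.castLE hkn i)
        ≤ (1 / (2 * (k : ℝ))) * (2 * Ssum) := this
      _ = (1 / (k : ℝ)) * Ssum := by field_simp
  refine ⟨main, fun hex => ?_⟩
  obtain ⟨P, hP⟩ := hex
  refine le_csInf ⟨cheegerVal G P, P, hP, rfl⟩ ?_
  rintro b ⟨Q, hQ, rfl⟩
  exact main Q hQ
end

section
/- Let M be an n×n Hermitian matrix with eigenvalues λ_0 ≤ λ_1 ≤ … ≤ λ_{n-1} (listed with multiplicity), and fix k ≤ n. Then the minimum of tr(U* M U), taken over all n×k complex matrices U whose columns are orthonormal, equals Σ_{i=0}^{k-1} λ_i. In particular, for any orthonormal vectors f_1,…,f_k in ℂ^n, Σ_{i=1}^{k} f_i* M f_i ≥ Σ_{i=0}^{k-1} λ_i. -/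
open Matrix Finset

-- combinatorial core
lemma keyA {n k : ℕ} (hkn : k ≤ n) (lam : Fin n → ℝ) (hmono : Monotone lam)
    (c : Fin n → ℝ) (h0 : ∀ j, 0 ≤ c j) (h1 : ∀ j, c j ≤ 1)
    (hsum : ∑ j, c j = k) :
    (∑ i : Fin k, lam (Fin.castLE hkn i)) ≤ ∑ j, lam j * c j := by
  set χ : Fin n → ℝ := fun j => if (j : ℕ) < k then 1 else 0 with hχ
  have hset : (univ : Finset (Fin n)).filter (fun j : Fin n => (j : ℕ) < k)
      = univ.map (Fin.castLEEmb hkn) := by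
    ext j
    simp only [mem_filter, mem_univ, true_and, mem_map, Fin.castLEEmb_apply]
    constructor
    · intro h; exact ⟨⟨(j : ℕ), h⟩, by ext; simp⟩
    · rintro ⟨i, rfl⟩; simpa using i.2
  have claim1 : (∑ i : Fin k, lam (Fin.castLE hkn i)) = ∑ j, lam j * χ j := by
    have : ∑ j, lam j * χ j = ∑ j ∈ (univ : Finset (Fin n)).filter (fun j : Fin n => (j : ℕ) < k), lam j := by
      rw [Finset.sum_filter]
      refine Finset.sum_congr rfl fun j _ => ?_
      by_cases h : (j : ℕ) < k <;> simp [hχ, h]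
    rw [this, hset, Finset.sum_map]
    rfl
  have claim2 : ∑ j, χ j = k := by
    have : ∑ j, χ j = ∑ j ∈ (univ : Finset (Fin n)).filter (fun j : Fin n => (j : ℕ) < k), (1 : ℝ) := by
      rw [Finset.sum_filter]
    rw [this, hset, Finset.sum_map]
    simp
  rcases Nat.eq_zero_or_pos k with hk0 | hkpos
  · subst hk0
    have hc : ∀ j ∈ (univ : Finset (Fin n)), c j = 0 := by
      have := (Finset.sum_eq_zero_iff_of_nonneg (fun j _ => h0 j)).mp (by simpa using hsum)
      simpa using this
    have : ∑ j, lam j * c j = 0 :=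
      Finset.sum_eq_zero fun j hj => by rw [hc j hj, mul_zero]
    simp [this]
  · set t : ℝ := lam ⟨k - 1, by omega⟩ with ht
    have key : ∀ j : Fin n, 0 ≤ (lam j - t) * (c j - χ j) := by
      intro j
      by_cases h : (j : ℕ) < k
      · have h1' : χ j = 1 := by simp [hχ, h]
        have hle : lam j ≤ t := hmono (by simp [Fin.le_def]; omega)
        rw [h1']
        nlinarith [h1 j]
      · have h0' : χ j = 0 := by simp [hχ, h]
        have hge : t ≤ lam j := hmono (by simp [Fin.le_def]; omega)
        rw [h0']
        exact mul_nonneg (by linarith) (by linarith [h0 j])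
    have hpos : 0 ≤ ∑ j, (lam j - t) * (c j - χ j) :=
      Finset.sum_nonneg fun j _ => key j
    have expand : ∑ j, (lam j - t) * (c j - χ j)
        = (∑ j, lam j * c j) - (∑ j, lam j * χ j) - t * (∑ j, c j) + t * (∑ j, χ j) := by
      rw [Finset.mul_sum, Finset.mul_sum, ← Finset.sum_sub_distrib, ← Finset.sum_sub_distrib,
        ← Finset.sum_add_distrib]
      exact Finset.sum_congr rfl fun j _ => by ring
    rw [claim1]
    rw [expand, hsum, claim2] at hpos
    linarith

-- reindex by permutation
lemma keyB {n k : ℕ} (hkn : k ≤ n) (lam μ : Fin n → ℝ) (hmono : Monotone lam)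
    (σ : Equiv.Perm (Fin n)) (hσ : lam = μ ∘ σ)
    (c : Fin n → ℝ) (h0 : ∀ j, 0 ≤ c j) (h1 : ∀ j, c j ≤ 1)
    (hsum : ∑ j, c j = k) :
    (∑ i : Fin k, lam (Fin.castLE hkn i)) ≤ ∑ j, μ j * c j := by
  have h : ∑ j, μ j * c j = ∑ j, lam j * c (σ j) := by
    rw [← Equiv.sum_comp σ (fun j => μ j * c j)]
    exact Finset.sum_congr rfl fun j _ => by rw [hσ]; simp
  rw [h]
  exact keyA hkn lam hmono (fun j => c (σ j)) (fun j => h0 _) (fun j => h1 _)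
    (by rw [Equiv.sum_comp σ c]; exact hsum)

-- trace as convex combination of eigenvalues
lemma traceRep {n k : ℕ} (M : Matrix (Fin n) (Fin n) ℂ) (hM : M.IsHermitian)
    (U : Matrix (Fin n) (Fin k) ℂ) (hU : Uᴴ * U = 1) :
    ∃ c : Fin n → ℝ, (∀ j, 0 ≤ c j) ∧ (∀ j, c j ≤ 1) ∧ (∑ j, c j = k) ∧
      (Uᴴ * M * U).trace = ((∑ j, hM.eigenvalues j * c j : ℝ) : ℂ) := by
  set V : Matrix (Fin n) (Fin n) ℂ := (hM.eigenvectorUnitary : Matrix (Fin n) (Fin n) ℂ) with hV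
  have hVV : V * Vᴴ = 1 := by
    rw [← Matrix.star_eq_conjTranspose]
    exact Matrix.mem_unitaryGroup_iff.mp hM.eigenvectorUnitary.2
  have hVV' : Vᴴ * V = 1 := by
    rw [← Matrix.star_eq_conjTranspose]
    exact Matrix.mem_unitaryGroup_iff'.mp hM.eigenvectorUnitary.2
  set W : Matrix (Fin n) (Fin k) ℂ := Vᴴ * U with hW
  have hWW : Wᴴ * W = 1 := by
    rw [hW, Matrix.conjTranspose_mul, Matrix.conjTranspose_conjTranspose,
      Matrix.mul_assoc, ← Matrix.mul_assoc V, hVV, Matrix.one_mul, hU]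
  set P : Matrix (Fin n) (Fin n) ℂ := W * Wᴴ with hP
  have hPP : P * P = P := by
    rw [hP, Matrix.mul_assoc, ← Matrix.mul_assoc Wᴴ, hWW, Matrix.one_mul]
  have hPH : Pᴴ = P := by
    rw [hP, Matrix.conjTranspose_mul, Matrix.conjTranspose_conjTranspose]
  set c : Fin n → ℝ := fun j => ∑ i, Complex.normSq (W j i) with hc
  have hPdiag : ∀ j, P j j = (c j : ℂ) := by
    intro j
    rw [hP, hc]
    simp only [Matrix.mul_apply, Matrix.conjTranspose_apply]
    push_cast
    exact Finset.sum_congr rfl fun i _ => by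
      rw [← Complex.mul_conj]; rfl
  have h0 : ∀ j, 0 ≤ c j := fun j => Finset.sum_nonneg fun i _ => Complex.normSq_nonneg _
  have h1 : ∀ j, c j ≤ 1 := by
    intro j
    have hPjj : P j j = ∑ l, P j l * P l j := by
      conv_lhs => rw [← hPP]
      rw [Matrix.mul_apply]
    have hterm : ∀ l, P j l * P l j = (Complex.normSq (P j l) : ℂ) := by
      intro l
      have h' : P l j = (starRingEnd ℂ) (P j l) := by
        conv_lhs => rw [← hPH]
        rw [Matrix.conjTranspose_apply]
        rfl
      rw [h', Complex.mul_conj]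
    have hsq : (c j : ℂ) = ∑ l, (Complex.normSq (P j l) : ℂ) := by
      rw [← hPdiag, hPjj]
      exact Finset.sum_congr rfl fun l _ => hterm l
    have hre : c j = ∑ l, Complex.normSq (P j l) := by exact_mod_cast hsq
    have hge : Complex.normSq (P j j) ≤ ∑ l, Complex.normSq (P j l) :=
      Finset.single_le_sum (fun l _ => Complex.normSq_nonneg _) (Finset.mem_univ j)
    have hcsq : Complex.normSq (P j j) = (c j) ^ 2 := by
      rw [hPdiag]; simp [Complex.normSq_ofReal, sq]
    nlinarith [h0 j, hre, hge, hcsq]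
  have hsum : ∑ j, c j = k := by
    have h2 : P.trace = (k : ℂ) := by
      rw [hP, Matrix.trace_mul_comm, hWW, Matrix.trace_one]
      simp
    have h3 : P.trace = ((∑ j, c j : ℝ) : ℂ) := by
      rw [Matrix.trace]
      push_cast
      exact Finset.sum_congr rfl fun j _ => by rw [Matrix.diag_apply, hPdiag j]
    rw [h3] at h2
    exact_mod_cast h2
  refine ⟨c, h0, h1, hsum, ?_⟩
  set D : Matrix (Fin n) (Fin n) ℂ :=
    Matrix.diagonal (fun j => (hM.eigenvalues j : ℂ)) with hD
  have hMD : M = V * D * Vᴴ := by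
    conv_lhs => rw [hM.spectral_theorem]
    rfl
  have hUMU : Uᴴ * M * U = Wᴴ * D * W := by
    rw [hMD, hW, Matrix.conjTranspose_mul, Matrix.conjTranspose_conjTranspose]
    simp only [Matrix.mul_assoc]
  rw [hUMU]
  have htr : (Wᴴ * D * W).trace = (P * D).trace := by
    rw [Matrix.trace_mul_comm (Wᴴ * D) W, ← Matrix.mul_assoc, ← hP]
  rw [htr, Matrix.trace]
  push_cast
  refine Finset.sum_congr rfl fun j _ => ?_
  rw [Matrix.diag_apply, hD, Matrix.mul_diagonal, hPdiag j]
  push_cast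
  ring

-- membership witness
lemma memberRep {n k : ℕ} (hkn : k ≤ n) (M : Matrix (Fin n) (Fin n) ℂ)
    (hM : M.IsHermitian) (σ : Equiv.Perm (Fin n)) :
    ∃ U : Matrix (Fin n) (Fin k) ℂ, Uᴴ * U = 1 ∧
      (Uᴴ * M * U).trace
        = ((∑ i : Fin k, hM.eigenvalues (σ (Fin.castLE hkn i)) : ℝ) : ℂ) := by
  set V : Matrix (Fin n) (Fin n) ℂ := (hM.eigenvectorUnitary : Matrix (Fin n) (Fin n) ℂ) with hV
  have hVV : V * Vᴴ = 1 := by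
    rw [← Matrix.star_eq_conjTranspose]
    exact Matrix.mem_unitaryGroup_iff.mp hM.eigenvectorUnitary.2
  set S : Matrix (Fin n) (Fin k) ℂ :=
    Matrix.of fun j i => if j = σ (Fin.castLE hkn i) then 1 else 0 with hS
  refine ⟨V * S, ?_, ?_⟩
  · ext i i'
    rw [Matrix.conjTranspose_mul, Matrix.mul_assoc, ← Matrix.mul_assoc Vᴴ,
      ← Matrix.star_eq_conjTranspose V,
      Matrix.mem_unitaryGroup_iff'.mp hM.eigenvectorUnitary.2, Matrix.one_mul]
    simp only [Matrix.mul_apply, Matrix.conjTranspose_apply, hS, Matrix.of_apply,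
      Matrix.one_apply, apply_ite star, star_one, star_zero, ite_mul, one_mul, zero_mul,
      Finset.sum_ite_eq', Finset.mem_univ, if_true]
    by_cases h : i = i'
    · subst h; simp
    · rw [if_neg fun h' => h (Fin.castLE_injective hkn (σ.injective h')), if_neg h]
  · have hdiag : Vᴴ * M * V = Matrix.diagonal (fun j => (hM.eigenvalues j : ℂ)) := by
      rw [← Matrix.star_eq_conjTranspose]
      have h := hM.conjStarAlgAut_star_eigenvectorUnitary
      rw [Unitary.conjStarAlgAut_star_apply] at h
      exact h
    have h1 : (V * S)ᴴ * M * (V * S)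
        = Sᴴ * (Matrix.diagonal (fun j => (hM.eigenvalues j : ℂ)) * S) := by
      rw [Matrix.conjTranspose_mul, ← hdiag]
      simp only [Matrix.mul_assoc]
    rw [h1, Matrix.trace]
    push_cast
    refine Finset.sum_congr rfl fun i _ => ?_
    simp only [Matrix.diag_apply, Matrix.mul_apply, Matrix.conjTranspose_apply, hS,
      Matrix.of_apply, apply_ite star, star_one, star_zero, ite_mul, one_mul, zero_mul,
      Finset.sum_ite_eq', Finset.mem_univ, if_true, Matrix.diagonal_apply]
    simp


/-- Ky Fan / Courant–Fischer: for a Hermitian `n × n` matrix `M` with eigenvalues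
`λ_0 ≤ … ≤ λ_{n-1}` and `k ≤ n`, the minimum of `tr(U* M U)` over `n × k` matrices `U`
with orthonormal columns equals `∑_{i=0}^{k-1} λ_i`; in particular, for orthonormal
vectors `f_1, …, f_k`, `∑_i f_i* M f_i ≥ ∑_{i=0}^{k-1} λ_i`. -/
theorem trace_min_orthonormal_eq_sum_eigenvalues {n k : ℕ} (hkn : k ≤ n)
    (M : Matrix (Fin n) (Fin n) ℂ) (hM : M.IsHermitian)
    (lam : Fin n → ℝ) (hmono : Monotone lam)
    (hperm : ∃ σ : Equiv.Perm (Fin n), lam = hM.eigenvalues ∘ σ) :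
    IsLeast { x : ℝ | ∃ U : Matrix (Fin n) (Fin k) ℂ,
        Uᴴ * U = 1 ∧ (Uᴴ * M * U).trace = (x : ℂ) }
      (∑ i : Fin k, lam (Fin.castLE hkn i)) ∧
    ∀ f : Fin k → (Fin n → ℂ),
      (∀ i j, star (f i) ⬝ᵥ f j = if i = j then 1 else 0) →
      (∑ i : Fin k, lam (Fin.castLE hkn i)) ≤
        ∑ i : Fin k, (star (f i) ⬝ᵥ M.mulVec (f i)).re := by
  obtain ⟨σ, hσ⟩ := hperm
  have hleast : IsLeast { x : ℝ | ∃ U : Matrix (Fin n) (Fin k) ℂ,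
      Uᴴ * U = 1 ∧ (Uᴴ * M * U).trace = (x : ℂ) }
      (∑ i : Fin k, lam (Fin.castLE hkn i)) := by
    constructor
    · obtain ⟨U, hU, htr⟩ := memberRep hkn M hM σ
      refine ⟨U, hU, ?_⟩
      rw [htr]
      norm_cast
      exact Finset.sum_congr rfl fun i _ => by rw [hσ]; rfl
    · rintro x ⟨U, hU, htr⟩
      obtain ⟨c, h0, h1, hsum, heq⟩ := traceRep M hM U hU
      have hx : x = ∑ j, hM.eigenvalues j * c j := by
        rw [heq] at htr
        exact_mod_cast htr.symm
      rw [hx]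
      exact keyB hkn lam hM.eigenvalues hmono σ hσ c h0 h1 hsum
  refine ⟨hleast, ?_⟩
  intro f hf
  set U : Matrix (Fin n) (Fin k) ℂ := Matrix.of fun j i => f i j with hUdef
  have hUU : Uᴴ * U = 1 := by
    ext i i'
    have h := hf i i'
    simp only [dotProduct, Pi.star_apply] at h
    simp only [Matrix.mul_apply, Matrix.conjTranspose_apply, hUdef, Matrix.of_apply,
      Matrix.one_apply]
    exact h
  set T : ℂ := (Uᴴ * M * U).trace with hT
  have htrace : T = ∑ i : Fin k, star (f i) ⬝ᵥ M.mulVec (f i) := by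
    rw [hT, Matrix.trace]
    refine Finset.sum_congr rfl fun i _ => ?_
    simp only [Matrix.diag_apply, Matrix.mul_apply, dotProduct, Matrix.mulVec,
      Matrix.conjTranspose_apply, hUdef, Matrix.of_apply, Pi.star_apply,
      Finset.sum_mul, Finset.mul_sum]
    rw [Finset.sum_comm]
    exact Finset.sum_congr rfl fun j _ => Finset.sum_congr rfl fun l _ => by ring
  have hherm : (Uᴴ * M * U)ᴴ = Uᴴ * M * U := by
    simp [Matrix.conjTranspose_mul, Matrix.mul_assoc, hM.eq]
  have hstar : (starRingEnd ℂ) T = T := by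
    have := Matrix.trace_conjTranspose (Uᴴ * M * U)
    rw [hherm] at this
    exact this.symm
  have hTre : T = ((T.re : ℝ) : ℂ) := (Complex.conj_eq_iff_re.mp hstar).symm
  have hmem : (Uᴴ * M * U).trace = ((T.re : ℝ) : ℂ) := by rw [← hT]; exact hTre
  have hle := hleast.2 ⟨U, hUU, hmem⟩
  have hre : T.re = ∑ i : Fin k, (star (f i) ⬝ᵥ M.mulVec (f i)).re := by
    rw [htrace]
    exact Complex.re_sum _ _
  rw [← hre]
  exact hle
end

section
/- Let n ≥ 2 and let k ≥ 2 divide n. Then the k-fold Cheeger constant of the complete graph K_n equals exactly h_{K_n}^{(k)} = (k−1)n / (2k(n−1)), and it is attained by any partition of the vertices into k parts each of size n/k. -/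
open Matrix Finset

lemma sum_pair_lt {k : ℕ} (f : Fin k → ℝ) :
    ∑ i : Fin k, ∑ j : Fin k, (if i < j then f i + f j else 0) = ((k:ℝ)-1) * ∑ i, f i := by
  have key : (∑ i : Fin k, ∑ j : Fin k, (if i < j then f i + f j else 0))
      + (∑ i : Fin k, ∑ j : Fin k, (if i < j then f i + f j else 0))
      = ∑ i : Fin k, ∑ j : Fin k, (if i ≠ j then f i + f j else 0) := by
    nth_rewrite 2 [show (∑ i : Fin k, ∑ j : Fin k, (if i < j then f i + f j else 0))
        = ∑ i : Fin k, ∑ j : Fin k, (if j < i then f i + f j else 0) by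
      rw [Finset.sum_comm]
      exact Finset.sum_congr rfl fun i _ => Finset.sum_congr rfl fun j _ => by
        by_cases h : j < i <;> simp [h, add_comm] ]
    rw [← Finset.sum_add_distrib]
    refine Finset.sum_congr rfl fun i _ => ?_
    rw [← Finset.sum_add_distrib]
    refine Finset.sum_congr rfl fun j _ => ?_
    rcases lt_trichotomy i j with h|h|h
    · simp [h, not_lt_of_gt h, h.ne]
    · simp [h]
    · simp [h, not_lt_of_gt h, h.ne']
  have rhs : ∑ i : Fin k, ∑ j : Fin k, (if i ≠ j then f i + f j else 0)
      = (2*(k:ℝ) - 2) * ∑ i, f i := by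
    have : ∀ i : Fin k, ∑ j : Fin k, (if i ≠ j then f i + f j else 0)
        = (∑ j : Fin k, (f i + f j)) - (f i + f i) := by
      intro i
      have h1 : ∑ j : Fin k, (if i = j then f i + f j else 0) = f i + f i := by
        rw [Finset.sum_ite_eq (univ : Finset (Fin k)) i (fun j => f i + f j)]
        simp
      have h2 : ∑ j : Fin k, (f i + f j)
          = (∑ j : Fin k, (if i ≠ j then f i + f j else 0)) + (f i + f i) := by
        rw [← h1, ← Finset.sum_add_distrib]
        refine Finset.sum_congr rfl fun j _ => ?_
        by_cases h : i = j <;> simp [h]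
      linarith [h2]
    simp only [this, Finset.sum_add_distrib, Finset.sum_sub_distrib, Finset.sum_const,
      Finset.card_univ, Fintype.card_fin, nsmul_eq_mul, ← Finset.mul_sum]
    ring
  linarith [key, rhs]

lemma gvol_top {n : ℕ} (S : Finset (Fin n)) :
    gvol (⊤ : SimpleGraph (Fin n)) S = S.card * (n - 1) := by
  unfold gvol
  simp [SimpleGraph.complete_graph_degree, Finset.sum_const, mul_comm]

lemma eCount_top {n : ℕ} {S T : Finset (Fin n)} (h : Disjoint S T) :
    eCount (⊤ : SimpleGraph (Fin n)) S T = S.card * T.card := by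
  unfold eCount
  have key : ∀ u ∈ S, (∑ v ∈ T, if (⊤ : SimpleGraph (Fin n)).Adj u v then 1 else 0) = T.card := by
    intro u hu
    rw [Finset.card_eq_sum_ones]
    refine Finset.sum_congr rfl fun v hv => ?_
    rw [if_pos ((SimpleGraph.top_adj u v).mpr fun he => Finset.disjoint_left.mp h hu (he ▸ hv))]
  rw [Finset.sum_congr rfl key, Finset.sum_const, smul_eq_mul]

lemma sum_card_eq {n k : ℕ} {P : Fin k → Finset (Fin n)}
    (hdisj : ∀ i j, i ≠ j → Disjoint (P i) (P j)) (hcov : ∀ v, ∃ i, v ∈ P i) :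
    ∑ i, (P i).card = n := by
  have huniv : (Finset.univ.biUnion P) = (univ : Finset (Fin n)) := by
    ext v
    simp only [Finset.mem_biUnion, Finset.mem_univ, true_and, iff_true]
    exact hcov v
  rw [← Finset.card_biUnion (fun i _ j _ hij => hdisj i j hij), huniv, Finset.card_univ,
    Fintype.card_fin]

lemma term_ge {x y d : ℝ} (hx : 0 < x) (hy : 0 < y) (hd : 0 < d) :
    (x+y)/(2*d) ≤ (x*y)/(min (x*d) (y*d)) := by
  rcases le_total x y with h|h
  · rw [min_eq_left (by nlinarith), div_le_div_iff₀ (by positivity) (by positivity)]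
    nlinarith [mul_le_mul_of_nonneg_right (mul_le_mul_of_nonneg_left h hx.le) hd.le]
  · rw [min_eq_right (by nlinarith), div_le_div_iff₀ (by positivity) (by positivity)]
    nlinarith [mul_le_mul_of_nonneg_right (mul_le_mul_of_nonneg_left h hy.le) hd.le]

lemma term_eq {x d : ℝ} (hx : 0 < x) (hd : 0 < d) :
    (x*x)/(min (x*d) (x*d)) = (x+x)/(2*d) := by
  rw [min_self]
  rw [div_eq_div_iff (by positivity) (by positivity)]
  ring

theorem cheegerVal_ge {n k : ℕ} (hn : 2 ≤ n) (hk : 2 ≤ k)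
    {P : Fin k → Finset (Fin n)} (h : IsVolPartition (⊤ : SimpleGraph (Fin n)) P) :
    ((k : ℝ) - 1) * n / (2 * k * ((n : ℝ) - 1)) ≤ cheegerVal (⊤ : SimpleGraph (Fin n)) P := by
  obtain ⟨hdisj, hcov, hpos⟩ := h
  have hn1 : 1 ≤ n := le_trans (by norm_num) hn
  have hd : (0:ℝ) < (n:ℝ) - 1 := by
    have : (2:ℝ) ≤ (n:ℝ) := by exact_mod_cast hn
    linarith
  have hk2 : (2:ℝ) ≤ (k:ℝ) := by exact_mod_cast hk
  have hk0 : (0:ℝ) < (k:ℝ) := by linarith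
  have hcardpos : ∀ i, 0 < (P i).card := by
    intro i
    have h2 := hpos i
    rw [gvol_top] at h2
    rcases Nat.eq_zero_or_pos (P i).card with h0|h0
    · rw [h0] at h2; simp at h2
    · exact h0
  have hcast : ∀ S : Finset (Fin n), ((S.card * (n-1) : ℕ) : ℝ) = (S.card:ℝ) * ((n:ℝ)-1) := by
    intro S; push_cast [Nat.cast_sub hn1]; ring
  set f : Fin k → ℝ := fun i => ((P i).card : ℝ)/(2*((n:ℝ)-1)) with hf
  have hsumf : ∑ i, f i = (n:ℝ)/(2*((n:ℝ)-1)) := by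
    simp only [hf]
    rw [← Finset.sum_div]
    congr 1
    exact_mod_cast sum_card_eq hdisj hcov
  have hstep : ∑ i : Fin k, ∑ j : Fin k, (if i < j then f i + f j else 0)
      ≤ ∑ i : Fin k, ∑ j : Fin k,
        (if i < j then (eCount (⊤ : SimpleGraph (Fin n)) (P i) (P j) : ℝ) /
          min (gvol (⊤ : SimpleGraph (Fin n)) (P i) : ℝ)
              (gvol (⊤ : SimpleGraph (Fin n)) (P j) : ℝ) else 0) := by
    refine Finset.sum_le_sum fun i _ => Finset.sum_le_sum fun j _ => ?_
    by_cases hij : i < j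
    · simp only [hij, if_true]
      rw [eCount_top (hdisj i j hij.ne), gvol_top, gvol_top, hcast, hcast]
      have hx : (0:ℝ) < ((P i).card:ℝ) := by exact_mod_cast hcardpos i
      have hy : (0:ℝ) < ((P j).card:ℝ) := by exact_mod_cast hcardpos j
      have h3 := term_ge hx hy hd
      have h4 : f i + f j = (((P i).card:ℝ) + ((P j).card:ℝ))/(2*((n:ℝ)-1)) := by
        simp only [hf]; rw [← add_div]
      rw [h4]
      push_cast
      exact h3
    · simp [hij]
  have h1 : ((k:ℝ)-1) * n / (2*k*((n:ℝ)-1))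
      = (1/(k:ℝ)) * (((k:ℝ)-1) * ((n:ℝ)/(2*((n:ℝ)-1)))) := by
    field_simp
    try ring
    try tauto
  rw [h1]
  unfold cheegerVal
  apply mul_le_mul_of_nonneg_left _ (by positivity)
  calc ((k:ℝ)-1) * ((n:ℝ)/(2*((n:ℝ)-1))) = ((k:ℝ)-1) * ∑ i, f i := by rw [hsumf]
    _ = ∑ i : Fin k, ∑ j : Fin k, (if i < j then f i + f j else 0) := (sum_pair_lt f).symm
    _ ≤ _ := hstep

theorem cheegerVal_eq' {n k : ℕ} (hn : 2 ≤ n) (hk : 2 ≤ k) (hdvd : k ∣ n)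
    {P : Fin k → Finset (Fin n)}
    (hdisj : ∀ i j, i ≠ j → Disjoint (P i) (P j)) (hcov : ∀ v, ∃ i, v ∈ P i)
    (hcard : ∀ i, (P i).card = n / k) :
    cheegerVal (⊤ : SimpleGraph (Fin n)) P
      = ((k : ℝ) - 1) * n / (2 * k * ((n : ℝ) - 1)) := by
  have hn1 : 1 ≤ n := le_trans (by norm_num) hn
  have hd : (0:ℝ) < (n:ℝ) - 1 := by
    have : (2:ℝ) ≤ (n:ℝ) := by exact_mod_cast hn
    linarith
  have hk2 : (2:ℝ) ≤ (k:ℝ) := by exact_mod_cast hk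
  have hk0 : (0:ℝ) < (k:ℝ) := by linarith
  set m := n / k with hmdef
  have hm : k * m = n := Nat.mul_div_cancel' hdvd
  have hmpos : 0 < m := by
    rcases Nat.eq_zero_or_pos m with h0|h0
    · rw [h0, Nat.mul_zero] at hm; omega
    · exact h0
  have hmr : (n:ℝ) = (k:ℝ) * (m:ℝ) := by exact_mod_cast hm.symm
  have hmx : (0:ℝ) < (m:ℝ) := by exact_mod_cast hmpos
  have hcast : ∀ S : Finset (Fin n), ((S.card * (n-1) : ℕ) : ℝ) = (S.card:ℝ) * ((n:ℝ)-1) := by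
    intro S; push_cast [Nat.cast_sub hn1]; ring
  set f : Fin k → ℝ := fun _ => ((m : ℕ) : ℝ)/(2*((n:ℝ)-1)) with hf
  unfold cheegerVal
  have hstep : ∑ i : Fin k, ∑ j : Fin k,
        (if i < j then (eCount (⊤ : SimpleGraph (Fin n)) (P i) (P j) : ℝ) /
          min (gvol (⊤ : SimpleGraph (Fin n)) (P i) : ℝ)
              (gvol (⊤ : SimpleGraph (Fin n)) (P j) : ℝ) else 0)
      = ∑ i : Fin k, ∑ j : Fin k, (if i < j then f i + f j else 0) := by
    refine Finset.sum_congr rfl fun i _ => Finset.sum_congr rfl fun j _ => ?_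
    by_cases hij : i < j
    · simp only [hij, if_true]
      rw [eCount_top (hdisj i j hij.ne), gvol_top, gvol_top, hcast, hcast, hcard i, hcard j]
      have h4 : f i + f j = (((m:ℕ):ℝ) + ((m:ℕ):ℝ))/(2*((n:ℝ)-1)) := by
        simp only [hf]; rw [← add_div]
      rw [h4]
      push_cast
      exact term_eq hmx hd
    · simp [hij]
  rw [hstep, sum_pair_lt f]
  simp only [hf, Finset.sum_const, Finset.card_univ, Fintype.card_fin, nsmul_eq_mul]
  rw [hmr]
  field_simp

lemma exists_equal_partition {n k : ℕ} (hn : 2 ≤ n) (hk : 2 ≤ k) (hdvd : k ∣ n) :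
    ∃ P : Fin k → Finset (Fin n), (∀ i j, i ≠ j → Disjoint (P i) (P j)) ∧
      (∀ v, ∃ i, v ∈ P i) ∧ (∀ i, (P i).card = n / k) := by
  set m := n / k with hmdef
  have hm : k * m = n := Nat.mul_div_cancel' hdvd
  have hmpos : 0 < m := by
    rcases Nat.eq_zero_or_pos m with h0|h0
    · rw [h0, Nat.mul_zero] at hm; omega
    · exact h0
  refine ⟨fun i => univ.filter (fun v => (v:ℕ)/m = i.val), ?_, ?_, ?_⟩
  · intro i j hij
    rw [Finset.disjoint_left]
    intro v hv hv'
    simp only [Finset.mem_filter] at hv hv'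
    exact hij (Fin.ext (hv.2 ▸ hv'.2))
  · intro v
    have hlt : (v:ℕ)/m < k := by
      rw [Nat.div_lt_iff_lt_mul hmpos]
      have := v.isLt
      omega
    exact ⟨⟨(v:ℕ)/m, hlt⟩, by simp⟩
  · intro i
    have hin : ∀ t, t < m → i.val * m + t < n := by
      intro t ht
      calc i.val * m + t < i.val * m + m := by omega
        _ = (i.val + 1) * m := by ring
        _ ≤ k * m := Nat.mul_le_mul_right m i.isLt
        _ = n := hm
    have hnpos : 0 < n := by omega
    conv_rhs => rw [← Finset.card_range m]
    refine Finset.card_nbij' (fun v : Fin n => (v:ℕ) % m)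
      (fun t : ℕ => (⟨(i.val * m + t) % n, Nat.mod_lt _ hnpos⟩ : Fin n)) ?_ ?_ ?_ ?_
    · intro v hv
      simp only [Finset.mem_coe, Finset.mem_range]
      exact Nat.mod_lt _ hmpos
    · intro t ht
      simp only [Finset.mem_coe, Finset.mem_range] at ht
      simp only [Finset.mem_coe, Finset.mem_filter, Finset.mem_univ, true_and]
      rw [Nat.mod_eq_of_lt (hin t ht)]
      rw [show i.val * m = m * i.val from Nat.mul_comm _ _, Nat.mul_add_div hmpos,
        Nat.div_eq_of_lt ht]
      simp
    · intro v hv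
      simp only [Finset.mem_coe, Finset.mem_filter, Finset.mem_univ, true_and] at hv
      apply Fin.ext
      simp only
      have : i.val * m + (v:ℕ) % m = (v:ℕ) := by
        rw [← hv, Nat.mul_comm]
        exact Nat.div_add_mod _ _
      rw [this, Nat.mod_eq_of_lt v.isLt]
    · intro t ht
      simp only [Finset.mem_coe, Finset.mem_range] at ht
      simp only
      rw [Nat.mod_eq_of_lt (hin t ht),
        show i.val * m = m * i.val from Nat.mul_comm _ _, Nat.mul_add_mod,
        Nat.mod_eq_of_lt ht]

/-- For `n ≥ 2`, `k ≥ 2` with `k ∣ n`, the `k`-fold Cheeger constant of the complete graph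
`K_n` equals exactly `(k-1)n / (2k(n-1))`, and it is attained by any partition of the
vertices into `k` parts of size `n/k`. -/
theorem cheegerConst_complete {n k : ℕ} (hn : 2 ≤ n) (hk : 2 ≤ k) (hdvd : k ∣ n) :
    cheegerConst n k (⊤ : SimpleGraph (Fin n))
        = ((k : ℝ) - 1) * n / (2 * k * ((n : ℝ) - 1)) ∧
    ∀ P : Fin k → Finset (Fin n),
      (∀ i j, i ≠ j → Disjoint (P i) (P j)) →
      (∀ v, ∃ i, v ∈ P i) →
      (∀ i, (P i).card = n / k) →
      cheegerVal (⊤ : SimpleGraph (Fin n)) P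
        = ((k : ℝ) - 1) * n / (2 * k * ((n : ℝ) - 1)) := by
  have hc : ∀ P : Fin k → Finset (Fin n),
      (∀ i j, i ≠ j → Disjoint (P i) (P j)) → (∀ v, ∃ i, v ∈ P i) →
      (∀ i, (P i).card = n / k) →
      cheegerVal (⊤ : SimpleGraph (Fin n)) P
        = ((k : ℝ) - 1) * n / (2 * k * ((n : ℝ) - 1)) :=
    fun P hd hco hcards => cheegerVal_eq' hn hk hdvd hd hco hcards
  obtain ⟨P₀, h1, h2, h3⟩ := exists_equal_partition hn hk hdvd
  have hmpos : 0 < n / k := by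
    have hm : k * (n / k) = n := Nat.mul_div_cancel' hdvd
    rcases Nat.eq_zero_or_pos (n / k) with h0|h0
    · rw [h0, Nat.mul_zero] at hm; omega
    · exact h0
  have hP0vol : IsVolPartition (⊤ : SimpleGraph (Fin n)) P₀ := by
    refine ⟨h1, h2, fun i => ?_⟩
    rw [gvol_top, h3]
    exact Nat.mul_pos hmpos (by omega)
  constructor
  · unfold cheegerConst
    apply le_antisymm
    · apply csInf_le
      · refine ⟨((k : ℝ) - 1) * n / (2 * k * ((n : ℝ) - 1)), ?_⟩
        rintro x ⟨P, hP, rfl⟩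
        exact cheegerVal_ge hn hk hP
      · exact ⟨P₀, hP0vol, (hc P₀ h1 h2 h3).symm⟩
    · refine le_csInf ⟨cheegerVal (⊤ : SimpleGraph (Fin n)) P₀, P₀, hP0vol, rfl⟩ ?_
      rintro x ⟨P, hP, rfl⟩
      exact cheegerVal_ge hn hk hP
  · exact hc
end
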